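/- arXiv:math/0009186 — 7 statements merged into one kernel-verified Lean document; each statement's English description precedes it below -/
import Mathlib

section
/- Let 𝔤 be a finite-dimensional complex Lie algebra, N a 𝔤-module and E a finite-dimensional 𝔤-module. The ℂ-linear map ι : F(N,N) ⊗_ℂ E → Hom_ℂ(N, N⊗E) defined by ι(f⊗v)(n) = f(n)⊗v is injective, and its image is exactly F(N, N⊗E), the locally finite part of Hom_ℂ(N, N⊗E); thus ι induces a ℂ-linear isomorphism F(N,N) ⊗_ℂ E ≅ F(N, N⊗E). -/
open TensorProduct

/-- `f` belongs to the locally finite part `F(M,N)` of `Hom_ℂ(M,N)` under the adjoint action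
`⁅x, f⁆ = x ∘ f - f ∘ x` of `L`: the `L`-submodule generated by `f` is finite-dimensional. -/
def InF (L : Type) [LieRing L] [LieAlgebra ℂ L] {M N : Type}
    [AddCommGroup M] [Module ℂ M] [LieRingModule L M] [LieModule ℂ L M]
    [AddCommGroup N] [Module ℂ N] [LieRingModule L N] [LieModule ℂ L N]
    (f : M →ₗ[ℂ] N) : Prop :=
  ∃ V : LieSubmodule ℂ L (M →ₗ[ℂ] N), f ∈ V ∧ FiniteDimensional ℂ V.toSubmodule

variable (L : Type) [LieRing L] [LieAlgebra ℂ L]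

/-- The locally finite part `F(M,N)` of `Hom_ℂ(M,N)`, as a `ℂ`-subspace. -/
def Fmod (M N : Type)
    [AddCommGroup M] [Module ℂ M] [LieRingModule L M] [LieModule ℂ L M]
    [AddCommGroup N] [Module ℂ N] [LieRingModule L N] [LieModule ℂ L N] :
    Submodule ℂ (M →ₗ[ℂ] N) where
  carrier := {f | InF L f}
  zero_mem' := ⟨⊥, LieSubmodule.zero_mem ⊥, by
    rw [LieSubmodule.bot_toSubmodule]; infer_instance⟩
  add_mem' := by
    rintro f g ⟨V, hfV, hV⟩ ⟨W, hgW, hW⟩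
    refine ⟨V ⊔ W, ?_, ?_⟩
    · exact add_mem ((LieSubmodule.mem_sup _ _ _).2 ⟨f, hfV, 0, W.zero_mem, by simp⟩)
        ((LieSubmodule.mem_sup _ _ _).2 ⟨0, V.zero_mem, g, hgW, by simp⟩)
    · rw [LieSubmodule.sup_toSubmodule]
      exact Submodule.finiteDimensional_sup _ _
  smul_mem' := by
    rintro c f ⟨V, hfV, hV⟩
    exact ⟨V, V.smul_mem c hfV, hV⟩

/-- The `ℂ`-linear map `Hom(N,N) ⊗ E → Hom(N, N ⊗ E)` given by `f ⊗ v ↦ (n ↦ f n ⊗ v)`. -/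
noncomputable def iotaMap (N E : Type)
    [AddCommGroup N] [Module ℂ N] [AddCommGroup E] [Module ℂ E] :
    ((N →ₗ[ℂ] N) ⊗[ℂ] E) →ₗ[ℂ] (N →ₗ[ℂ] (N ⊗[ℂ] E)) :=
  TensorProduct.lift
    (((LinearMap.llcomp ℂ N N (N ⊗[ℂ] E)).comp (TensorProduct.mk ℂ N E).flip).flip)

noncomputable def ctrB (N E : Type)
    [AddCommGroup N] [Module ℂ N] [AddCommGroup E] [Module ℂ E] :
    (E →ₗ[ℂ] ℂ) →ₗ[ℂ] ((N →ₗ[ℂ] N ⊗[ℂ] E) →ₗ[ℂ] (N →ₗ[ℂ] N)) :=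
  (LinearMap.llcomp ℂ N (N ⊗[ℂ] E) N) ∘ₗ
    (LinearMap.llcomp ℂ (N ⊗[ℂ] E) (N ⊗[ℂ] ℂ) N (TensorProduct.rid ℂ N).toLinearMap) ∘ₗ
    (LinearMap.lTensorHom N)

section Aux

variable {L} {N E : Type}
    [AddCommGroup N] [Module ℂ N] [LieRingModule L N] [LieModule ℂ L N]
    [AddCommGroup E] [Module ℂ E] [LieRingModule L E] [LieModule ℂ L E]

lemma iotaMap_tmul (f : N →ₗ[ℂ] N) (v : E) (n : N) :
    iotaMap N E (f ⊗ₜ[ℂ] v) n = f n ⊗ₜ[ℂ] v := rfl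

lemma ctrB_apply (φ : E →ₗ[ℂ] ℂ) (h : N →ₗ[ℂ] N ⊗[ℂ] E) (n : N) :
    ctrB N E φ h n = TensorProduct.rid ℂ N (LinearMap.lTensor N φ (h n)) := rfl

lemma lie_iotaMap_tmul (x : L) (f : N →ₗ[ℂ] N) (v : E) :
    ⁅x, iotaMap N E (f ⊗ₜ[ℂ] v)⁆ =
      iotaMap N E (⁅x, f⁆ ⊗ₜ[ℂ] v) + iotaMap N E (f ⊗ₜ[ℂ] ⁅x, v⁆) := by
  ext n
  simp only [LieHom.lie_apply, iotaMap_tmul, LinearMap.add_apply,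
    TensorProduct.LieModule.lie_tmul_right, TensorProduct.sub_tmul]
  abel

lemma lie_rid_lTensor (x : L) (φ : E →ₗ[ℂ] ℂ) (w : N ⊗[ℂ] E) :
    ⁅x, TensorProduct.rid ℂ N (LinearMap.lTensor N φ w)⁆ =
      TensorProduct.rid ℂ N (LinearMap.lTensor N φ ⁅x, w⁆) -
      TensorProduct.rid ℂ N (LinearMap.lTensor N (φ ∘ₗ LieModule.toEnd ℂ L E x) w) := by
  induction w using TensorProduct.induction_on with
  | zero => simp
  | tmul m e =>
    simp [TensorProduct.LieModule.lie_tmul_right, LieModule.toEnd_apply_apply,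
      TensorProduct.rid_tmul, lie_smul]
  | add a c ha hc =>
    simp only [lie_add, map_add, ha, hc]
    abel

lemma lie_ctrB (x : L) (φ : E →ₗ[ℂ] ℂ) (h : N →ₗ[ℂ] N ⊗[ℂ] E) :
    ⁅x, ctrB N E φ h⁆ =
      ctrB N E φ ⁅x, h⁆ - ctrB N E (φ ∘ₗ LieModule.toEnd ℂ L E x) h := by
  ext n
  simp only [LieHom.lie_apply, LinearMap.sub_apply, ctrB_apply, map_sub]
  rw [lie_rid_lTensor]
  abel

lemma recon (b : Module.Basis (Fin (Module.finrank ℂ E)) ℂ E) (w : N ⊗[ℂ] E) :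
    ∑ j, (TensorProduct.rid ℂ N (LinearMap.lTensor N (b.coord j) w)) ⊗ₜ[ℂ] b j = w := by
  induction w using TensorProduct.induction_on with
  | zero => simp
  | tmul m e =>
    simp only [LinearMap.lTensor_tmul, TensorProduct.rid_tmul, TensorProduct.smul_tmul]
    rw [← TensorProduct.tmul_sum]
    simp [Module.Basis.coord_apply, Module.Basis.sum_repr]
  | add a c ha hc =>
    simp only [map_add, TensorProduct.add_tmul, Finset.sum_add_distrib, ha, hc]

lemma ctrB_iota (φ : E →ₗ[ℂ] ℂ) (f : N →ₗ[ℂ] N) (v : E) :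
    ctrB N E φ (iotaMap N E (f ⊗ₜ[ℂ] v)) = φ v • f := by
  ext n
  simp [ctrB_apply, iotaMap_tmul, TensorProduct.rid_tmul]

end Aux

/-- For a finite-dimensional complex Lie algebra `L`, an `L`-module `N` and a
finite-dimensional `L`-module `E`, the map `ι : F(N,N) ⊗ E → Hom(N, N⊗E)`,
`ι(f ⊗ v)(n) = f(n) ⊗ v`, is injective with image exactly the locally finite part
`F(N, N⊗E)`; hence it induces a `ℂ`-linear isomorphism `F(N,N) ⊗ E ≅ F(N, N⊗E)`. -/
theorem statement1 [FiniteDimensional ℂ L] (N E : Type)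
    [AddCommGroup N] [Module ℂ N] [LieRingModule L N] [LieModule ℂ L N]
    [AddCommGroup E] [Module ℂ E] [LieRingModule L E] [LieModule ℂ L E]
    [FiniteDimensional ℂ E] :
    (∀ (f : N →ₗ[ℂ] N) (v : E) (n : N), iotaMap N E (f ⊗ₜ[ℂ] v) n = f n ⊗ₜ[ℂ] v) ∧
    Function.Injective
      ((iotaMap N E).comp (LinearMap.rTensor E (Fmod L N N).subtype)) ∧
    LinearMap.range ((iotaMap N E).comp (LinearMap.rTensor E (Fmod L N N).subtype)) =
      Fmod L N (N ⊗[ℂ] E) ∧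
    Nonempty ((↥(Fmod L N N) ⊗[ℂ] E) ≃ₗ[ℂ] ↥(Fmod L N (N ⊗[ℂ] E))) := by
  classical
  set S : (↥(Fmod L N N) ⊗[ℂ] E) →ₗ[ℂ] (N →ₗ[ℂ] N ⊗[ℂ] E) :=
    (iotaMap N E).comp (LinearMap.rTensor E (Fmod L N N).subtype) with hS
  set b : Module.Basis (Fin (Module.finrank ℂ E)) ℂ E := Module.finBasis ℂ E with hb
  -- reconstruction for elements of the source of iotaMap
  have hρ : ∀ t : (N →ₗ[ℂ] N) ⊗[ℂ] E,
      ∑ j, (ctrB N E (b.coord j) (iotaMap N E t)) ⊗ₜ[ℂ] b j = t := by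
    intro t
    induction t using TensorProduct.induction_on with
    | zero => simp
    | tmul f v =>
      simp only [ctrB_iota, TensorProduct.smul_tmul]
      rw [← TensorProduct.tmul_sum]
      simp [Module.Basis.coord_apply, Module.Basis.sum_repr]
    | add a c ha hc =>
      simp only [map_add, TensorProduct.add_tmul, Finset.sum_add_distrib, ha, hc]
  have hinj_iota : Function.Injective (iotaMap N E) := by
    intro s t hst
    rw [← hρ s, ← hρ t, hst]
  have hinj : Function.Injective S := by
    rw [hS, LinearMap.coe_comp]
    exact hinj_iota.comp
      (Module.Flat.rTensor_preserves_injective_linearMap _ (Submodule.injective_subtype _))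
  have hrange : LinearMap.range S = Fmod L N (N ⊗[ℂ] E) := by
    apply le_antisymm
    · rintro _ ⟨t, rfl⟩
      induction t using TensorProduct.induction_on with
      | zero => rw [map_zero]; exact (Fmod L N (N ⊗[ℂ] E)).zero_mem
      | tmul fp v =>
        obtain ⟨V, hfV, hV⟩ := fp.2
        haveI : FiniteDimensional ℂ V.toSubmodule := hV
        set T : (↥V.toSubmodule ⊗[ℂ] E) →ₗ[ℂ] (N →ₗ[ℂ] N ⊗[ℂ] E) :=
          (iotaMap N E).comp (LinearMap.rTensor E V.toSubmodule.subtype) with hT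
        have hTt : ∀ (g : N →ₗ[ℂ] N) (hg : g ∈ V) (v' : E),
            T ((⟨g, hg⟩ : ↥V.toSubmodule) ⊗ₜ[ℂ] v') = iotaMap N E (g ⊗ₜ[ℂ] v') := by
          intro g hg v'
          simp [hT]
        have hTlie : ∀ (x : L) (s : ↥V.toSubmodule ⊗[ℂ] E),
            ⁅x, T s⁆ ∈ LinearMap.range T := by
          intro x s
          induction s using TensorProduct.induction_on with
          | zero => simp
          | tmul gp v' =>
            obtain ⟨g, hg⟩ := gp
            rw [hTt g hg v', lie_iotaMap_tmul]
            exact ⟨(⟨⁅x, g⁆, V.lie_mem hg⟩ : ↥V.toSubmodule) ⊗ₜ[ℂ] v' +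
              (⟨g, hg⟩ : ↥V.toSubmodule) ⊗ₜ[ℂ] ⁅x, v'⁆, by
                rw [map_add, hTt _ (V.lie_mem hg) v', hTt g hg ⁅x, v'⁆]⟩
          | add a c ha hc =>
            rw [map_add, lie_add]
            exact add_mem ha hc
        refine ⟨{ LinearMap.range T with
            lie_mem := ?_ }, ?_, ?_⟩
        · rintro x m ⟨s, rfl⟩
          exact hTlie x s
        · have : S (fp ⊗ₜ[ℂ] v) = iotaMap N E ((fp : N →ₗ[ℂ] N) ⊗ₜ[ℂ] v) := by
            simp [hS]
          rw [this, ← hTt _ hfV v]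
          exact ⟨_, rfl⟩
        · exact inferInstanceAs (FiniteDimensional ℂ (LinearMap.range T))
      | add a c ha hc =>
        rw [map_add]
        exact add_mem ha hc
    · intro g hg
      obtain ⟨W, hgW, hW⟩ := hg
      haveI : FiniteDimensional ℂ W.toSubmodule := hW
      set V₀ : Submodule ℂ (N →ₗ[ℂ] N) :=
        ⨆ j : Fin (Module.finrank ℂ E),
          Submodule.map (ctrB N E (b.coord j)) W.toSubmodule with hV₀
      have hlie : ∀ (x : L) (m : N →ₗ[ℂ] N), m ∈ V₀ → ⁅x, m⁆ ∈ V₀ := by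
        intro x m hm
        rw [hV₀] at hm
        refine Submodule.iSup_induction (motive := fun m => ⁅x, m⁆ ∈ V₀) _ hm ?_ (by simp) ?_
        · rintro j _ ⟨h, hh, rfl⟩
          rw [lie_ctrB]
          refine sub_mem ?_ ?_
          · exact Submodule.mem_iSup_of_mem j (Submodule.mem_map_of_mem (W.lie_mem hh))
          · have expand : ctrB N E (b.coord j ∘ₗ LieModule.toEnd ℂ L E x) h =
                ∑ k, (b.coord j ∘ₗ LieModule.toEnd ℂ L E x) (b k) •
                  ctrB N E (b.coord k) h := by
              conv_lhs => rw [← Module.Basis.sum_dual_apply_smul_coord b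
                (b.coord j ∘ₗ LieModule.toEnd ℂ L E x)]
              rw [map_sum, LinearMap.sum_apply]
              simp
            rw [expand]
            refine Submodule.sum_mem _ fun k _ => Submodule.smul_mem _ _ ?_
            exact Submodule.mem_iSup_of_mem k (Submodule.mem_map_of_mem hh)
        · intro y z hy hz
          rw [lie_add]
          exact add_mem hy hz
      have hπ : ∀ j, ctrB N E (b.coord j) g ∈ Fmod L N N := by
        intro j
        refine ⟨{ V₀ with lie_mem := fun {x m} hm => hlie x m hm }, ?_, ?_⟩
        · exact Submodule.mem_iSup_of_mem j (Submodule.mem_map_of_mem hgW)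
        · exact inferInstanceAs (FiniteDimensional ℂ V₀)
      refine ⟨∑ j, (⟨ctrB N E (b.coord j) g, hπ j⟩ : ↥(Fmod L N N)) ⊗ₜ[ℂ] b j, ?_⟩
      ext n
      rw [map_sum]
      simp only [hS, LinearMap.coe_comp, Function.comp_apply, LinearMap.sum_apply]
      have : ∀ j : Fin (Module.finrank ℂ E),
          (iotaMap N E) (LinearMap.rTensor E (Fmod L N N).subtype
            ((⟨ctrB N E (b.coord j) g, hπ j⟩ : ↥(Fmod L N N)) ⊗ₜ[ℂ] b j)) n =
          (TensorProduct.rid ℂ N (LinearMap.lTensor N (b.coord j) (g n))) ⊗ₜ[ℂ] b j := by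
        intro j
        rw [LinearMap.rTensor_tmul]
        rfl
      rw [Finset.sum_congr rfl fun j _ => this j]
      exact recon b (g n)
  refine ⟨fun f v n => rfl, hinj, hrange, ⟨(LinearEquiv.ofInjective S hinj).trans
    (LinearEquiv.ofEq _ _ hrange)⟩⟩
end

section
/- Let 𝔤 be a finite-dimensional complex Lie algebra, N a 𝔤-module and E a finite-dimensional 𝔤-module. The ℂ-linear map ι'' : F(N,N) ⊗_ℂ End_ℂ(E) → Hom_ℂ(N⊗E, N⊗E) defined by ι''(f⊗φ)(n⊗v) = f(n)⊗φ(v) is injective, its image is exactly F(N⊗E, N⊗E), and the resulting bijection F(N,N) ⊗_ℂ End_ℂ(E) ≅ F(N⊗E, N⊗E) is an isomorphism of ℂ-algebras (where the left-hand side carries the tensor-product algebra structure and composition is the product on the right-hand side). -/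
open TensorProduct

variable (L : Type) [LieRing L] [LieAlgebra ℂ L]

/-- The `ℂ`-linear map `Hom(N,N) ⊗ End_ℂ(E) → Hom(N⊗E, N⊗E)`, `f ⊗ φ ↦ (n ⊗ v ↦ f n ⊗ φ v)`. -/
noncomputable def iotaMap2 (N E : Type)
    [AddCommGroup N] [Module ℂ N] [AddCommGroup E] [Module ℂ E] :
    ((N →ₗ[ℂ] N) ⊗[ℂ] (Module.End ℂ E)) →ₗ[ℂ] ((N ⊗[ℂ] E) →ₗ[ℂ] (N ⊗[ℂ] E)) :=
  TensorProduct.homTensorHomMap (RingHom.id ℂ) N E N E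


section Aux

lemma mem_Fmod_iff {M N : Type}
    [AddCommGroup M] [Module ℂ M] [LieRingModule L M] [LieModule ℂ L M]
    [AddCommGroup N] [Module ℂ N] [LieRingModule L N] [LieModule ℂ L N]
    {f : M →ₗ[ℂ] N} : f ∈ Fmod L M N ↔ InF L f := Iff.rfl

variable {M W : Type} [AddCommGroup M] [Module ℂ M] [AddCommGroup W] [Module ℂ W]

/-- Contraction of the second tensor factor against a functional. -/
noncomputable def contrDual (β : W →ₗ[ℂ] ℂ) : (M ⊗[ℂ] W) →ₗ[ℂ] M :=
  (TensorProduct.rid ℂ M).toLinearMap ∘ₗ LinearMap.lTensor M β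

@[simp] lemma contrDual_tmul (β : W →ₗ[ℂ] ℂ) (m : M) (w : W) :
    contrDual β (m ⊗ₜ[ℂ] w) = β w • m := by
  simp [contrDual]

lemma contrDual_sum_apply {K : Type} [Fintype K] (c : K → ℂ) (β : K → (W →ₗ[ℂ] ℂ))
    (t : M ⊗[ℂ] W) :
    contrDual (M := M) (∑ k, c k • β k) t = ∑ k, c k • contrDual (M := M) (β k) t := by
  induction t using TensorProduct.induction_on with
  | zero => simp
  | tmul m w => simp [Finset.smul_sum, Finset.sum_smul, LinearMap.sum_apply, smul_smul]
  | add s t hs ht => simp [map_add, hs, ht, Finset.sum_add_distrib]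

lemma contrDual_reconstruct {K : Type} [Fintype K] (b : Module.Basis K ℂ W) (t : M ⊗[ℂ] W) :
    ∑ k, (contrDual (M := M) (b.coord k) t) ⊗ₜ[ℂ] (b k) = t := by
  induction t using TensorProduct.induction_on with
  | zero => simp
  | tmul m w =>
      simp only [contrDual_tmul, Module.Basis.coord_apply, TensorProduct.smul_tmul]
      rw [← TensorProduct.tmul_sum]
      congr 1
      exact b.sum_repr w
  | add s t hs ht =>
      simp only [map_add, TensorProduct.add_tmul, Finset.sum_add_distrib, hs, ht]

end Aux
section LieAux

variable {M W : Type} [AddCommGroup M] [Module ℂ M] [LieRingModule L M] [LieModule ℂ L M]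
  [AddCommGroup W] [Module ℂ W] [LieRingModule L W] [LieModule ℂ L W]

lemma lie_contrDual (x : L) (β : W →ₗ[ℂ] ℂ) (t : M ⊗[ℂ] W) :
    ⁅x, contrDual (M := M) β t⁆ =
      contrDual (M := M) β ⁅x, t⁆
        - contrDual (M := M) (β ∘ₗ (LieModule.toEnd ℂ L W x : W →ₗ[ℂ] W)) t := by
  induction t using TensorProduct.induction_on with
  | zero => simp
  | tmul m w =>
      rw [TensorProduct.LieModule.lie_tmul_right]
      simp only [contrDual_tmul, map_add, lie_smul, LinearMap.comp_apply,
        LieModule.toEnd_apply_apply]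
      abel
  | add s u hs hu =>
      simp only [map_add, lie_add, hs, hu]
      abel

lemma contrDual_mem_finite [FiniteDimensional ℂ W]
    (V : LieSubmodule ℂ L (M ⊗[ℂ] W)) (hV : FiniteDimensional ℂ V.toSubmodule)
    {t : M ⊗[ℂ] W} (ht : t ∈ V) (β : W →ₗ[ℂ] ℂ) :
    ∃ S : LieSubmodule ℂ L M, contrDual (M := M) β t ∈ S ∧
      FiniteDimensional ℂ S.toSubmodule := by
  classical
  haveI := hV
  set S' : Submodule ℂ M :=
    ⨆ γ : W →ₗ[ℂ] ℂ, Submodule.map (contrDual (M := M) γ) V.toSubmodule with hS'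
  have hmem : ∀ (γ : W →ₗ[ℂ] ℂ) {u : M ⊗[ℂ] W}, u ∈ V → contrDual (M := M) γ u ∈ S' :=
    fun γ u hu => (le_iSup (fun γ : W →ₗ[ℂ] ℂ =>
      Submodule.map (contrDual (M := M) γ) V.toSubmodule) γ) (Submodule.mem_map_of_mem hu)
  have hlie : ∀ (x : L) {m : M}, m ∈ S' → ⁅x, m⁆ ∈ S' := by
    intro x m hm
    refine Submodule.iSup_induction (motive := fun m => ⁅x, m⁆ ∈ S') _ hm ?_ (by simp) ?_
    · rintro γ m ⟨v, hv, rfl⟩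
      rw [lie_contrDual (L := L) x γ v]
      exact sub_mem (hmem _ (V.lie_mem hv)) (hmem _ hv)
    · intro m₁ m₂ h1 h2; rw [lie_add]; exact add_mem h1 h2
  refine ⟨{ toSubmodule := S', lie_mem := fun {x m} hm => hlie x hm }, hmem β ht, ?_⟩
  let b := Module.finBasis ℂ W
  have hle : S' ≤ ⨆ k : Fin (Module.finrank ℂ W),
      Submodule.map (contrDual (M := M) (b.coord k)) V.toSubmodule := by
    refine iSup_le fun γ => ?_
    rintro m ⟨v, hv, rfl⟩
    have hγ : contrDual (M := M) γ v = ∑ k, γ (b k) • contrDual (M := M) (b.coord k) v := by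
      rw [← contrDual_sum_apply, b.sum_dual_apply_smul_coord γ]
    rw [hγ]
    exact sum_mem fun k _ => Submodule.smul_mem _ _
      (le_iSup (fun k : Fin (Module.finrank ℂ W) => Submodule.map (contrDual (M := M) (b.coord k)) V.toSubmodule) k (Submodule.mem_map_of_mem hv))
  exact Submodule.finiteDimensional_of_le hle

end LieAux
section Iota

variable (N E : Type)
  [AddCommGroup N] [Module ℂ N] [LieRingModule L N] [LieModule ℂ L N]
  [AddCommGroup E] [Module ℂ E] [LieRingModule L E] [LieModule ℂ L E]

lemma iotaMap2_tmul (f : N →ₗ[ℂ] N) (φ : Module.End ℂ E) (n : N) (v : E) :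
    iotaMap2 N E (f ⊗ₜ[ℂ] φ) (n ⊗ₜ[ℂ] v) = f n ⊗ₜ[ℂ] φ v := rfl

/-- `iotaMap2` as a morphism of Lie modules. -/
noncomputable def iotaLie :
    ((N →ₗ[ℂ] N) ⊗[ℂ] Module.End ℂ E) →ₗ⁅ℂ,L⁆ ((N ⊗[ℂ] E) →ₗ[ℂ] (N ⊗[ℂ] E)) :=
  { iotaMap2 N E with
    map_lie' := by
      intro x t
      show iotaMap2 N E ⁅x, t⁆ = ⁅x, iotaMap2 N E t⁆
      induction t using TensorProduct.induction_on with
      | zero => simp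
      | tmul f φ =>
          rw [TensorProduct.LieModule.lie_tmul_right, map_add]
          refine TensorProduct.ext' fun n v => ?_
          simp only [LinearMap.add_apply, iotaMap2, TensorProduct.homTensorHomMap_apply,
            TensorProduct.map_tmul, LieHom.lie_apply, TensorProduct.LieModule.lie_tmul_right,
            map_add, TensorProduct.sub_tmul, TensorProduct.tmul_sub]
          abel
      | add s u hs hu => rw [lie_add, map_add, map_add, hs, hu, lie_add] }

@[simp] lemma iotaLie_apply (t : (N →ₗ[ℂ] N) ⊗[ℂ] Module.End ℂ E) :
    iotaLie L N E t = iotaMap2 N E t := rfl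

end Iota
section Bij

variable (N E : Type) [AddCommGroup N] [Module ℂ N] [AddCommGroup E] [Module ℂ E]
  [FiniteDimensional ℂ E]

lemma iotaMap2_bijective : Function.Bijective (iotaMap2 N E) := by
  classical
  set b := Module.finBasis ℂ E with hb
  set σ : ((N ⊗[ℂ] E) →ₗ[ℂ] (N ⊗[ℂ] E)) → ((N →ₗ[ℂ] N) ⊗[ℂ] Module.End ℂ E) :=
    fun g => ∑ i, ∑ j,
      ((contrDual (M := N) (b.coord i)) ∘ₗ g ∘ₗ ((TensorProduct.mk ℂ N E).flip (b j)))
        ⊗ₜ[ℂ] ((b.coord j).smulRight (b i)) with hσ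
  have hLeft : ∀ t, σ (iotaMap2 N E t) = t := by
    intro t
    induction t using TensorProduct.induction_on with
    | zero =>
        simp only [map_zero, hσ, LinearMap.comp_zero, LinearMap.zero_comp,
          TensorProduct.zero_tmul, Finset.sum_const_zero]
    | tmul f φ =>
        have hcomp : ∀ i j, (contrDual (M := N) (b.coord i)) ∘ₗ
            (TensorProduct.map f φ) ∘ₗ ((TensorProduct.mk ℂ N E).flip (b j)) =
            (b.coord i (φ (b j))) • f := by
          intro i j
          ext n
          simp [TensorProduct.mk_apply]
        have hφ : ∑ i, ∑ j, (b.coord i (φ (b j))) • ((b.coord j).smulRight (b i)) = φ := by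
          apply b.ext
          intro j'
          simp only [LinearMap.sum_apply, LinearMap.smul_apply, LinearMap.smulRight_apply,
            Module.Basis.coord_apply, Module.Basis.repr_self, Finsupp.single_apply]
          simp only [ite_smul, one_smul, zero_smul, smul_ite, smul_zero,
            Finset.sum_ite_eq, Finset.mem_univ, if_true]
          exact b.sum_repr _
        simp only [hσ, iotaMap2, TensorProduct.homTensorHomMap_apply, hcomp,
          TensorProduct.smul_tmul, ← TensorProduct.tmul_sum]
        rw [hφ]
    | add s u hs hu =>
        simp only [map_add, hσ, LinearMap.comp_add, LinearMap.add_comp,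
          TensorProduct.add_tmul, Finset.sum_add_distrib] at *
        rw [hs, hu]
  have hRight : ∀ g, iotaMap2 N E (σ g) = g := by
    intro g
    refine TensorProduct.ext' fun n v => ?_
    simp only [hσ, map_sum, LinearMap.sum_apply, iotaMap2,
      TensorProduct.homTensorHomMap_apply, TensorProduct.map_tmul, LinearMap.comp_apply,
      LinearMap.flip_apply, TensorProduct.mk_apply, LinearMap.smulRight_apply,
      TensorProduct.tmul_smul]
    rw [Finset.sum_comm]
    have hrec : ∀ j, ∑ i, (contrDual (M := N) (b.coord i)) (g (n ⊗ₜ[ℂ] b j)) ⊗ₜ[ℂ] b i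
        = g (n ⊗ₜ[ℂ] b j) := fun j => contrDual_reconstruct b _
    calc ∑ j, ∑ i, (b.coord j) v •
            ((contrDual (M := N) (b.coord i)) (g (n ⊗ₜ[ℂ] b j)) ⊗ₜ[ℂ] b i)
        = ∑ j, (b.coord j) v • g (n ⊗ₜ[ℂ] b j) := by
          refine Finset.sum_congr rfl fun j _ => ?_
          rw [← Finset.smul_sum, hrec j]
      _ = g (n ⊗ₜ[ℂ] v) := by
          have hv : (n ⊗ₜ[ℂ] v) = ∑ j, (b.coord j) v • (n ⊗ₜ[ℂ] b j) := by
            simp only [← TensorProduct.tmul_smul, ← TensorProduct.tmul_sum,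
              Module.Basis.coord_apply]
            rw [b.sum_repr]
          rw [hv, map_sum]
          simp only [map_smul]
  exact ⟨Function.LeftInverse.injective hLeft, Function.RightInverse.surjective hRight⟩

end Bij
section Mem

variable (N E : Type)
  [AddCommGroup N] [Module ℂ N] [LieRingModule L N] [LieModule ℂ L N]
  [AddCommGroup E] [Module ℂ E] [LieRingModule L E] [LieModule ℂ L E]
  [FiniteDimensional ℂ E]

lemma iota_tmul_mem_Fmod {f : N →ₗ[ℂ] N} (hf : f ∈ Fmod L N N) (φ : Module.End ℂ E) :
    iotaMap2 N E (f ⊗ₜ[ℂ] φ) ∈ Fmod L (N ⊗[ℂ] E) (N ⊗[ℂ] E) := by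
  obtain ⟨V, hfV, hV⟩ := hf
  haveI := hV
  set ι : (V.toSubmodule ⊗[ℂ] Module.End ℂ E) →ₗ[ℂ] ((N →ₗ[ℂ] N) ⊗[ℂ] Module.End ℂ E) :=
    LinearMap.rTensor (Module.End ℂ E) (V.toSubmodule.subtype) with hι
  have hlie : ∀ {x : L} {m}, m ∈ LinearMap.range ι → ⁅x, m⁆ ∈ LinearMap.range ι := by
    intro x m hm
    obtain ⟨s, rfl⟩ := hm
    induction s using TensorProduct.induction_on with
    | zero => rw [map_zero, lie_zero]; exact zero_mem _
    | tmul v φ' =>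
        have hv : ι (v ⊗ₜ[ℂ] φ') = (v : N →ₗ[ℂ] N) ⊗ₜ[ℂ] φ' := by
          simp [hι]
        rw [hv, TensorProduct.LieModule.lie_tmul_right]
        have h1 : (⁅x, (v : N →ₗ[ℂ] N)⁆) ⊗ₜ[ℂ] φ' ∈ LinearMap.range ι :=
          ⟨(⟨⁅x, (v : N →ₗ[ℂ] N)⁆, V.lie_mem v.2⟩ : V.toSubmodule) ⊗ₜ[ℂ] φ', by simp [hι]⟩
        have h2 : (v : N →ₗ[ℂ] N) ⊗ₜ[ℂ] ⁅x, φ'⁆ ∈ LinearMap.range ι :=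
          ⟨v ⊗ₜ[ℂ] ⁅x, φ'⁆, by simp [hι]⟩
        exact add_mem h1 h2
    | add s u hs hu => rw [map_add, lie_add]; exact add_mem hs hu
  set T : LieSubmodule ℂ L ((N →ₗ[ℂ] N) ⊗[ℂ] Module.End ℂ E) :=
    { toSubmodule := LinearMap.range ι, lie_mem := hlie } with hT
  haveI hTfd : FiniteDimensional ℂ T.toSubmodule := by
    show FiniteDimensional ℂ (LinearMap.range ι)
    infer_instance
  refine ⟨LieSubmodule.map (iotaLie L N E) T, ?_, ?_⟩
  · rw [LieSubmodule.mem_map]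
    exact ⟨f ⊗ₜ[ℂ] φ, ⟨(⟨f, hfV⟩ : V.toSubmodule) ⊗ₜ[ℂ] φ, by simp [hι]⟩, rfl⟩
  · rw [LieSubmodule.toSubmodule_map]
    infer_instance

end Mem
set_option synthInstance.maxHeartbeats 1000000 in
/-- The map `ι'' : F(N,N) ⊗ End_ℂ(E) → Hom(N⊗E, N⊗E)`,
`ι''(f ⊗ φ)(n ⊗ v) = f(n) ⊗ φ(v)`, is injective with image exactly `F(N⊗E, N⊗E)`, and the
resulting bijection is an isomorphism of `ℂ`-algebras: it is multiplicative on pure tensors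
(where the tensor product algebra structure multiplies componentwise by composition) and
sends `id ⊗ id` to `id`. -/
theorem statement3 [FiniteDimensional ℂ L] (N E : Type)
    [AddCommGroup N] [Module ℂ N] [LieRingModule L N] [LieModule ℂ L N]
    [AddCommGroup E] [Module ℂ E] [LieRingModule L E] [LieModule ℂ L E]
    [FiniteDimensional ℂ E] :
    (∀ (f : N →ₗ[ℂ] N) (φ : Module.End ℂ E) (n : N) (v : E),
        iotaMap2 N E (f ⊗ₜ[ℂ] φ) (n ⊗ₜ[ℂ] v) = f n ⊗ₜ[ℂ] φ v) ∧
    Function.Injective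
      ((iotaMap2 N E).comp
        (LinearMap.rTensor (Module.End ℂ E) (Fmod L N N).subtype)) ∧
    LinearMap.range
      ((iotaMap2 N E).comp
        (LinearMap.rTensor (Module.End ℂ E) (Fmod L N N).subtype)) =
      Fmod L (N ⊗[ℂ] E) (N ⊗[ℂ] E) ∧
    (∀ (f f' : N →ₗ[ℂ] N) (φ φ' : Module.End ℂ E),
        iotaMap2 N E ((f ∘ₗ f') ⊗ₜ[ℂ] (φ ∘ₗ φ')) =
          iotaMap2 N E (f ⊗ₜ[ℂ] φ) ∘ₗ iotaMap2 N E (f' ⊗ₜ[ℂ] φ')) ∧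
    iotaMap2 N E (LinearMap.id ⊗ₜ[ℂ] LinearMap.id) = LinearMap.id := by
  classical
  have hbij := iotaMap2_bijective N E
  have hrT : Function.Injective (LinearMap.rTensor (Module.End ℂ E) (Fmod L N N).subtype) :=
    Module.Flat.rTensor_preserves_injective_linearMap _ (Submodule.injective_subtype _)
  refine ⟨fun f φ n v => rfl, hbij.injective.comp hrT, ?_, ?_, ?_⟩
  · apply le_antisymm
    · rintro g ⟨s, rfl⟩
      simp only [LinearMap.coe_comp, Function.comp_apply]
      induction s using TensorProduct.induction_on with
      | zero => rw [map_zero, map_zero]; exact zero_mem _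
      | tmul f φ =>
          have h : (LinearMap.rTensor (Module.End ℂ E) (Fmod L N N).subtype) (f ⊗ₜ[ℂ] φ)
              = (f : N →ₗ[ℂ] N) ⊗ₜ[ℂ] φ := by simp
          rw [h]
          exact iota_tmul_mem_Fmod L N E f.2 φ
      | add s u hs hu => rw [map_add, map_add]; exact add_mem hs hu
    · intro g hg
      obtain ⟨t, rfl⟩ := hbij.surjective g
      obtain ⟨Wsub, hgW, hWfd⟩ := hg
      set Vt := LieSubmodule.comap (iotaLie L N E) Wsub with hVt
      have htV : t ∈ Vt := by rw [LieSubmodule.mem_comap]; exact hgW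
      have hVtfd : FiniteDimensional ℂ Vt.toSubmodule := by
        haveI := hWfd
        have hle : Submodule.map (iotaMap2 N E) Vt.toSubmodule ≤ Wsub.toSubmodule := by
          rw [hVt, LieSubmodule.toSubmodule_comap]
          exact Submodule.map_comap_le _ _
        haveI := Submodule.finiteDimensional_of_le hle
        exact Module.Finite.equiv
          (Submodule.equivMapOfInjective (iotaMap2 N E) hbij.injective Vt.toSubmodule).symm
      set b := Module.finBasis ℂ (Module.End ℂ E) with hb
      have hak : ∀ k, contrDual (M := N →ₗ[ℂ] N) (b.coord k) t ∈ Fmod L N N := by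
        intro k
        obtain ⟨S, hS1, hS2⟩ := contrDual_mem_finite (L := L) Vt hVtfd htV (b.coord k)
        exact ⟨S, hS1, hS2⟩
      refine ⟨∑ k, (⟨contrDual (M := N →ₗ[ℂ] N) (b.coord k) t, hak k⟩ :
        Fmod L N N) ⊗ₜ[ℂ] b k, ?_⟩
      have hsum : (LinearMap.rTensor (Module.End ℂ E) (Fmod L N N).subtype)
          (∑ k, (⟨contrDual (M := N →ₗ[ℂ] N) (b.coord k) t, hak k⟩ :
            Fmod L N N) ⊗ₜ[ℂ] b k) = t := by
        rw [map_sum]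
        simp only [LinearMap.rTensor_tmul, Submodule.coe_subtype]
        exact contrDual_reconstruct b t
      simp only [LinearMap.coe_comp, Function.comp_apply, hsum]
  · intro f f' φ φ'
    show TensorProduct.homTensorHomMap (RingHom.id ℂ) N E N E _ = _
    simp only [TensorProduct.homTensorHomMap_apply]
    exact TensorProduct.map_comp f φ f' φ'
  · show TensorProduct.homTensorHomMap (RingHom.id ℂ) N E N E _ = _
    simp only [TensorProduct.homTensorHomMap_apply]
    exact TensorProduct.map_id
end

section
/- Let 𝔤 be a finite-dimensional complex Lie algebra, N a 𝔤-module and E a finite-dimensional 𝔤-module. Set A := F(N,N) and B := F(N⊗E, N⊗E), and view F(N, N⊗E) as a right A-module via precomposition. Then the algebra homomorphism B → End_A(F(N, N⊗E)) given by left composition (b ↦ (ψ ↦ b∘ψ)) is bijective; that is, End_A(F(N, N⊗E)) = F(N⊗E, N⊗E). -/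
open TensorProduct

variable (L : Type) [LieRing L] [LieAlgebra ℂ L]

section Helpers

variable {L : Type} [LieRing L] [LieAlgebra ℂ L]

/-- If `f` lies in a finite-dimensional Lie-stable subspace, it is in the locally finite part. -/
lemma inF_of_mem {M N : Type}
    [AddCommGroup M] [Module ℂ M] [LieRingModule L M] [LieModule ℂ L M]
    [AddCommGroup N] [Module ℂ N] [LieRingModule L N] [LieModule ℂ L N]
    (p : Submodule ℂ (M →ₗ[ℂ] N))
    (hstab : ∀ (x : L) f, f ∈ p → ⁅x, f⁆ ∈ p)
    (hfin : FiniteDimensional ℂ p) {f : M →ₗ[ℂ] N} (hf : f ∈ p) : InF L f :=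
  ⟨{ toSubmodule := p, lie_mem := fun {x} {m} h => hstab x m h }, hf, hfin⟩

/-- Images of finite-dimensional Lie submodules under bilinear maps satisfying the Leibniz
rule are Lie-stable. -/
lemma map₂_lie_stable {M₁ M₂ P Q : Type}
    [AddCommGroup M₁] [Module ℂ M₁] [LieRingModule L M₁] [LieModule ℂ L M₁]
    [AddCommGroup M₂] [Module ℂ M₂] [LieRingModule L M₂] [LieModule ℂ L M₂]
    [AddCommGroup P] [Module ℂ P] [LieRingModule L P] [LieModule ℂ L P]
    [AddCommGroup Q] [Module ℂ Q] [LieRingModule L Q] [LieModule ℂ L Q]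
    (B : M₁ →ₗ[ℂ] M₂ →ₗ[ℂ] (P →ₗ[ℂ] Q))
    (hB : ∀ (x : L) v w, ⁅x, B v w⁆ = B ⁅x, v⁆ w + B v ⁅x, w⁆)
    (V : LieSubmodule ℂ L M₁) (W : LieSubmodule ℂ L M₂) :
    ∀ (x : L) f, f ∈ Submodule.map₂ B V.toSubmodule W.toSubmodule →
      ⁅x, f⁆ ∈ Submodule.map₂ B V.toSubmodule W.toSubmodule := by
  intro x f hf
  rw [Submodule.map₂_eq_span_image2] at hf ⊢
  induction hf using Submodule.span_induction with
  | mem g hg =>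
      obtain ⟨v, hv, w, hw, rfl⟩ := hg
      rw [hB]
      exact Submodule.add_mem _
        (Submodule.subset_span ⟨_, V.lie_mem hv, _, hw, rfl⟩)
        (Submodule.subset_span ⟨_, hv, _, W.lie_mem hw, rfl⟩)
  | zero => simp only [lie_zero]; exact Submodule.zero_mem _
  | add a b _ _ ha hb => rw [lie_add]; exact Submodule.add_mem _ ha hb
  | smul c a _ ha => rw [lie_smul]; exact Submodule.smul_mem _ _ ha

lemma inF_map₂ {M₁ M₂ P Q : Type}
    [AddCommGroup M₁] [Module ℂ M₁] [LieRingModule L M₁] [LieModule ℂ L M₁]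
    [AddCommGroup M₂] [Module ℂ M₂] [LieRingModule L M₂] [LieModule ℂ L M₂]
    [AddCommGroup P] [Module ℂ P] [LieRingModule L P] [LieModule ℂ L P]
    [AddCommGroup Q] [Module ℂ Q] [LieRingModule L Q] [LieModule ℂ L Q]
    (B : M₁ →ₗ[ℂ] M₂ →ₗ[ℂ] (P →ₗ[ℂ] Q))
    (hB : ∀ (x : L) v w, ⁅x, B v w⁆ = B ⁅x, v⁆ w + B v ⁅x, w⁆)
    (V : LieSubmodule ℂ L M₁) (W : LieSubmodule ℂ L M₂)
    (hV : FiniteDimensional ℂ V.toSubmodule) (hW : FiniteDimensional ℂ W.toSubmodule)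
    {f : P →ₗ[ℂ] Q} (hf : f ∈ Submodule.map₂ B V.toSubmodule W.toSubmodule) : InF L f :=
  inF_of_mem _ (map₂_lie_stable B hB V W)
    ((Submodule.fg_iff_finiteDimensional _).1
      (Submodule.FG.map₂ B ((Submodule.fg_iff_finiteDimensional _).2 hV)
        ((Submodule.fg_iff_finiteDimensional _).2 hW))) hf

lemma lie_comp {M N P : Type}
    [AddCommGroup M] [Module ℂ M] [LieRingModule L M] [LieModule ℂ L M]
    [AddCommGroup N] [Module ℂ N] [LieRingModule L N] [LieModule ℂ L N]
    [AddCommGroup P] [Module ℂ P] [LieRingModule L P] [LieModule ℂ L P]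
    (x : L) (g : N →ₗ[ℂ] P) (f : M →ₗ[ℂ] N) :
    ⁅x, g ∘ₗ f⁆ = ⁅x, g⁆ ∘ₗ f + g ∘ₗ ⁅x, f⁆ := by
  ext m
  simp only [LieHom.lie_apply, LinearMap.add_apply, LinearMap.comp_apply, map_sub]
  abel

lemma inF_comp {M N P : Type}
    [AddCommGroup M] [Module ℂ M] [LieRingModule L M] [LieModule ℂ L M]
    [AddCommGroup N] [Module ℂ N] [LieRingModule L N] [LieModule ℂ L N]
    [AddCommGroup P] [Module ℂ P] [LieRingModule L P] [LieModule ℂ L P]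
    {g : N →ₗ[ℂ] P} {f : M →ₗ[ℂ] N} (hg : InF L g) (hf : InF L f) :
    InF L (g ∘ₗ f) := by
  obtain ⟨V, hgV, hV⟩ := hg
  obtain ⟨W, hfW, hW⟩ := hf
  refine inF_map₂ (LinearMap.llcomp ℂ M N P) (fun x v w => ?_) V W hV hW
    (Submodule.apply_mem_map₂ _ hgV hfW)
  simpa [LinearMap.llcomp_apply'] using lie_comp x v w

variable (L) in
/-- The contraction `N ⊗ E → N` by a functional on `E`. -/
noncomputable def contr {N E : Type}
    [AddCommGroup N] [Module ℂ N] [AddCommGroup E] [Module ℂ E]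
    (l : Module.Dual ℂ E) : N ⊗[ℂ] E →ₗ[ℂ] N :=
  TensorProduct.lift ((LinearMap.lsmul ℂ N ∘ₗ l).flip)

@[simp] lemma contr_tmul {N E : Type}
    [AddCommGroup N] [Module ℂ N] [AddCommGroup E] [Module ℂ E]
    (l : Module.Dual ℂ E) (n : N) (e : E) :
    (contr l : N ⊗[ℂ] E →ₗ[ℂ] N) (n ⊗ₜ e) = l e • n := by
  simp [contr]

section NE

variable {N E : Type}
    [AddCommGroup N] [Module ℂ N] [LieRingModule L N] [LieModule ℂ L N]
    [AddCommGroup E] [Module ℂ E] [LieRingModule L E] [LieModule ℂ L E]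

lemma contr_add' (l l' : Module.Dual ℂ E) :
    (contr (l + l') : N ⊗[ℂ] E →ₗ[ℂ] N) = contr l + contr l' := by
  apply TensorProduct.ext'
  intro n e
  simp [add_smul]

lemma contr_smul' (c : ℂ) (l : Module.Dual ℂ E) :
    (contr (c • l) : N ⊗[ℂ] E →ₗ[ℂ] N) = c • contr l := by
  apply TensorProduct.ext'
  intro n e
  simp [mul_smul]

lemma lie_contr (x : L) (l : Module.Dual ℂ E) (t : N ⊗[ℂ] E) :
    ⁅x, (contr l : N ⊗[ℂ] E →ₗ[ℂ] N) t⁆ = contr l ⁅x, t⁆ + contr ⁅x, l⁆ t := by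
  induction t using TensorProduct.induction_on with
  | zero => simp
  | tmul n e =>
      simp only [contr_tmul, lie_smul, TensorProduct.LieModule.lie_tmul_right, map_add, contr_tmul,
        Module.Dual.lie_apply, neg_smul]
      abel
  | add a b ha hb =>
      simp only [map_add, lie_add, ha, hb]
      abel

/-- Precomposition-with-`ψ`, postcomposition-with-contraction bilinear map. -/
noncomputable def Bcontr :
    (N →ₗ[ℂ] N ⊗[ℂ] E) →ₗ[ℂ] Module.Dual ℂ E →ₗ[ℂ] (N →ₗ[ℂ] N) :=
  LinearMap.mk₂ ℂ (fun ψ l => contr l ∘ₗ ψ)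
    (fun ψ ψ' l => by ext n; simp)
    (fun c ψ l => by ext n; simp)
    (fun ψ l l' => by
      show contr (l + l') ∘ₗ ψ = contr l ∘ₗ ψ + contr l' ∘ₗ ψ
      rw [contr_add', LinearMap.add_comp])
    (fun c ψ l => by
      show contr (c • l) ∘ₗ ψ = c • (contr l ∘ₗ ψ)
      rw [contr_smul', LinearMap.smul_comp])

@[simp] lemma Bcontr_apply (ψ : N →ₗ[ℂ] N ⊗[ℂ] E) (l : Module.Dual ℂ E) :
    (Bcontr ψ l : N →ₗ[ℂ] N) = contr l ∘ₗ ψ := rfl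

noncomputable def Bpost :
    (N →ₗ[ℂ] N ⊗[ℂ] E) →ₗ[ℂ] Module.Dual ℂ E →ₗ[ℂ] (N ⊗[ℂ] E →ₗ[ℂ] N ⊗[ℂ] E) :=
  LinearMap.mk₂ ℂ (fun f l => f ∘ₗ contr l)
    (fun f f' l => by
      show (f + f') ∘ₗ contr l = f ∘ₗ contr l + f' ∘ₗ contr l
      rw [LinearMap.add_comp])
    (fun c f l => by
      show (c • f) ∘ₗ contr l = c • (f ∘ₗ contr l)
      rw [LinearMap.smul_comp])
    (fun f l l' => by
      show f ∘ₗ contr (l + l') = f ∘ₗ contr l + f ∘ₗ contr l'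
      rw [contr_add', LinearMap.comp_add])
    (fun c f l => by
      show f ∘ₗ contr (c • l) = c • (f ∘ₗ contr l)
      rw [contr_smul', LinearMap.comp_smul])

@[simp] lemma Bpost_apply (f : N →ₗ[ℂ] N ⊗[ℂ] E) (l : Module.Dual ℂ E) :
    (Bpost f l : N ⊗[ℂ] E →ₗ[ℂ] N ⊗[ℂ] E) = f ∘ₗ contr l := rfl

lemma finDualTop [FiniteDimensional ℂ E] :
    FiniteDimensional ℂ (⊤ : LieSubmodule ℂ L (Module.Dual ℂ E)).toSubmodule := by
  rw [LieSubmodule.top_toSubmodule]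
  infer_instance

lemma inF_contr_comp [FiniteDimensional ℂ E] {ψ : N →ₗ[ℂ] N ⊗[ℂ] E}
    (h : InF L ψ) (l : Module.Dual ℂ E) : InF L ((contr l : N ⊗[ℂ] E →ₗ[ℂ] N) ∘ₗ ψ) := by
  obtain ⟨V, hV, hVfin⟩ := h
  refine inF_map₂ Bcontr (fun x v w => ?_) V ⊤ hVfin finDualTop
    (Submodule.apply_mem_map₂ _ hV (by simp))
  ext n
  simp only [Bcontr_apply, LieHom.lie_apply, LinearMap.add_apply, LinearMap.comp_apply,
    lie_contr x w (v n), map_sub]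
  abel

lemma inF_comp_contr [FiniteDimensional ℂ E] {f : N →ₗ[ℂ] N ⊗[ℂ] E}
    (h : InF L f) (l : Module.Dual ℂ E) :
    InF L (f ∘ₗ (contr l : N ⊗[ℂ] E →ₗ[ℂ] N)) := by
  obtain ⟨V, hV, hVfin⟩ := h
  refine inF_map₂ Bpost (fun x v w => ?_) V ⊤ hVfin finDualTop
    (Submodule.apply_mem_map₂ _ hV (by simp))
  refine LinearMap.ext fun t => ?_
  have hc : (contr w : N ⊗[ℂ] E →ₗ[ℂ] N) ⁅x, t⁆
      = ⁅x, (contr w : N ⊗[ℂ] E →ₗ[ℂ] N) t⁆ - contr ⁅x, w⁆ t := by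
    rw [lie_contr x w t]; abel
  simp only [Bpost_apply, LieHom.lie_apply, LinearMap.add_apply, LinearMap.comp_apply, hc,
    map_sub]
  abel

/-- `n ↦ n ⊗ e`. -/
noncomputable def tmr (e : E) : N →ₗ[ℂ] N ⊗[ℂ] E := (TensorProduct.mk ℂ N E).flip e

@[simp] lemma tmr_apply (e : E) (n : N) : (tmr e : N →ₗ[ℂ] N ⊗[ℂ] E) n = n ⊗ₜ e := rfl

lemma lie_tmr (x : L) (e : E) :
    ⁅x, (tmr e : N →ₗ[ℂ] N ⊗[ℂ] E)⁆ = tmr ⁅x, e⁆ := by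
  ext n
  simp only [LieHom.lie_apply, tmr_apply, TensorProduct.LieModule.lie_tmul_right]
  abel

lemma inF_tmr [FiniteDimensional ℂ E] (e : E) :
    InF L (tmr e : N →ₗ[ℂ] N ⊗[ℂ] E) := by
  refine inF_of_mem (LinearMap.range ((TensorProduct.mk ℂ N E).flip)) ?_ ?_
    (LinearMap.mem_range.2 ⟨e, rfl⟩)
  · rintro x f hf
    obtain ⟨e', rfl⟩ := LinearMap.mem_range.1 hf
    exact LinearMap.mem_range.2 ⟨⁅x, e'⁆, (lie_tmr x e').symm⟩
  · infer_instance

end NE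

end Helpers

set_option maxHeartbeats 1000000 in
set_option synthInstance.maxHeartbeats 1000000 in
/-- Set `A := F(N,N)` and `B := F(N⊗E, N⊗E)`, and view `F(N, N⊗E)` as a
right `A`-module via precomposition (encoded as a left `Aᵐᵒᵖ`-module structure pinned down by
`hsmul`). Then the algebra homomorphism `B → End_A(F(N, N⊗E))` given by left composition is
bijective: left composition by `b ∈ B` preserves `F(N, N⊗E)` and is `A`-linear, the resulting
map is injective, and every `A`-linear endomorphism of `F(N, N⊗E)` is left composition by a
unique `b ∈ B`. -/
theorem statement4 [FiniteDimensional ℂ L] (N E : Type)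
    [AddCommGroup N] [Module ℂ N] [LieRingModule L N] [LieModule ℂ L N]
    [AddCommGroup E] [Module ℂ E] [LieRingModule L E] [LieModule ℂ L E]
    [FiniteDimensional ℂ E]
    (A : Subalgebra ℂ (Module.End ℂ N)) (hA : ∀ f : Module.End ℂ N, f ∈ A ↔ InF L f)
    [Module (↥A)ᵐᵒᵖ ↥(Fmod L N (N ⊗[ℂ] E))]
    (hsmul : ∀ (a : ↥A) (ψ : ↥(Fmod L N (N ⊗[ℂ] E))),
      ((MulOpposite.op a • ψ : ↥(Fmod L N (N ⊗[ℂ] E))) : N →ₗ[ℂ] N ⊗[ℂ] E) =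
        (ψ : N →ₗ[ℂ] N ⊗[ℂ] E) ∘ₗ (a : Module.End ℂ N)) :
    (∀ b : (N ⊗[ℂ] E) →ₗ[ℂ] (N ⊗[ℂ] E), InF L b →
      ∀ ψ : ↥(Fmod L N (N ⊗[ℂ] E)), InF L (b ∘ₗ (ψ : N →ₗ[ℂ] N ⊗[ℂ] E))) ∧
    (∀ b b' : (N ⊗[ℂ] E) →ₗ[ℂ] (N ⊗[ℂ] E), InF L b → InF L b' →
      (∀ ψ : ↥(Fmod L N (N ⊗[ℂ] E)),
        b ∘ₗ (ψ : N →ₗ[ℂ] N ⊗[ℂ] E) = b' ∘ₗ (ψ : N →ₗ[ℂ] N ⊗[ℂ] E)) → b = b') ∧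
    (∀ Φ : ↥(Fmod L N (N ⊗[ℂ] E)) →ₗ[(↥A)ᵐᵒᵖ] ↥(Fmod L N (N ⊗[ℂ] E)),
      ∃ b : (N ⊗[ℂ] E) →ₗ[ℂ] (N ⊗[ℂ] E), InF L b ∧
        ∀ ψ : ↥(Fmod L N (N ⊗[ℂ] E)),
          ((Φ ψ : ↥(Fmod L N (N ⊗[ℂ] E))) : N →ₗ[ℂ] N ⊗[ℂ] E) =
            b ∘ₗ (ψ : N →ₗ[ℂ] N ⊗[ℂ] E)) := by
  classical
  refine ⟨?_, ?_, ?_⟩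
  · intro b hb ψ
    exact inF_comp hb ψ.2
  · intro b b' hb hb' h
    apply TensorProduct.ext'
    intro n e
    have h1 := congrArg (fun F : N →ₗ[ℂ] N ⊗[ℂ] E => F n)
      (h ⟨tmr e, inF_tmr e⟩)
    simpa using h1
  · intro Φ
    have : Module.Finite ℂ E := ‹FiniteDimensional ℂ E›
    let bE := Module.Free.chooseBasis ℂ E
    have key : ∀ t : N ⊗[ℂ] E,
        (∑ i, ((contr (bE.coord i) : N ⊗[ℂ] E →ₗ[ℂ] N) t) ⊗ₜ[ℂ] bE i) = t := by
      intro t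
      induction t using TensorProduct.induction_on with
      | zero => simp
      | tmul n e =>
          simp only [contr_tmul, Module.Basis.coord_apply]
          simp_rw [TensorProduct.smul_tmul]
          rw [← TensorProduct.tmul_sum, Module.Basis.sum_repr]
      | add a b ha hb =>
          simp only [map_add, TensorProduct.add_tmul, Finset.sum_add_distrib, ha, hb]
    set Ψi : Module.Free.ChooseBasisIndex ℂ E → ↥(Fmod L N (N ⊗[ℂ] E)) :=
      fun i => ⟨tmr (bE i), inF_tmr (bE i)⟩ with hΨi
    refine ⟨∑ i, ((Φ (Ψi i) : N →ₗ[ℂ] N ⊗[ℂ] E) ∘ₗ contr (bE.coord i)), ?_, ?_⟩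
    · exact Submodule.sum_mem (Fmod L (N ⊗[ℂ] E) (N ⊗[ℂ] E))
        (fun i _ => inF_comp_contr (Φ (Ψi i)).2 _)
    · intro ψ
      have ha : ∀ i, InF L
          ((contr (bE.coord i) : N ⊗[ℂ] E →ₗ[ℂ] N) ∘ₗ (ψ : N →ₗ[ℂ] N ⊗[ℂ] E)) :=
        fun i => inF_contr_comp ψ.2 _
      set a : Module.Free.ChooseBasisIndex ℂ E → ↥A := fun i =>
        ⟨(contr (bE.coord i) : N ⊗[ℂ] E →ₗ[ℂ] N) ∘ₗ (ψ : N →ₗ[ℂ] N ⊗[ℂ] E),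
          (hA _).2 (ha i)⟩ with hai
      have hψdec : ψ = ∑ i, MulOpposite.op (a i) • Ψi i := by
        apply Subtype.coe_injective
        show (ψ : N →ₗ[ℂ] N ⊗[ℂ] E)
          = ((∑ i, MulOpposite.op (a i) • Ψi i : ↥(Fmod L N (N ⊗[ℂ] E))) : N →ₗ[ℂ] N ⊗[ℂ] E)
        rw [AddSubmonoidClass.coe_finset_sum]
        refine LinearMap.ext fun n => ?_
        rw [LinearMap.sum_apply]
        have hterm : ∀ i,
            ((MulOpposite.op (a i) • Ψi i : ↥(Fmod L N (N ⊗[ℂ] E))) : N →ₗ[ℂ] N ⊗[ℂ] E) n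
            = ((contr (bE.coord i) : N ⊗[ℂ] E →ₗ[ℂ] N) ((ψ : N →ₗ[ℂ] N ⊗[ℂ] E) n))
              ⊗ₜ[ℂ] bE i := by
          intro i
          rw [hsmul]
          rfl
        simp_rw [hterm]
        exact (key _).symm
      have h1 : Φ ψ = ∑ i, MulOpposite.op (a i) • Φ (Ψi i) := by
        rw [hψdec, map_sum]
        simp_rw [map_smul]
      rw [h1, AddSubmonoidClass.coe_finset_sum]
      refine LinearMap.ext fun n => ?_
      simp only [LinearMap.sum_apply, LinearMap.comp_apply]
      refine Finset.sum_congr rfl fun i _ => ?_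
      rw [hsmul]
      rfl
end

section
/- Let l ≥ 1, let k₁, …, k_l ∈ ℂ with k_l = 0 and each kᵢ (1 ≤ i ≤ l−1) lexicographically positive (Re kᵢ > 0, or Re kᵢ = 0 and Im kᵢ > 0). Set u = (k₁ + 1/2, …, k_{l−1} + 1/2, 1/2) ∈ ℂ^l. Then for γ ∈ {0,1}^l, the vector u − γ lies in the orbit W·u of u under the group W of signed permutations of ℂ^l if and only if γ = 0 or γ = e_l (the l-th standard basis vector). -/
/-- `w` is a signed permutation of `ℂ^l`: there are a permutation `σ` of the coordinates and
signs `ε i ∈ {1, -1}` with `(w v) i = ε i * v (σ⁻¹ i)`. -/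
def IsSignedPerm {l : ℕ} (w : (Fin l → ℂ) →ₗ[ℂ] (Fin l → ℂ)) : Prop :=
  ∃ (σ : Equiv.Perm (Fin l)) (ε : Fin l → ℂ),
    (∀ i, ε i = 1 ∨ ε i = -1) ∧ ∀ (v : Fin l → ℂ) (i : Fin l), w v i = ε i * v (σ.symm i)

/-- `Γ = {0,1}^l`, the set of vectors with all coordinates `0` or `1`. -/
def Gam (l : ℕ) : Set (Fin l → ℂ) := {γ | ∀ i, γ i = 0 ∨ γ i = 1}

/-- `ρ₁ = (1/2, …, 1/2)`. -/
noncomputable def rho1 (l : ℕ) : Fin l → ℂ := fun _ => 1/2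

/-- The shifted action `w_* γ = w(γ - ρ₁) + ρ₁`. -/
noncomputable def wstar {l : ℕ} (w : (Fin l → ℂ) →ₗ[ℂ] (Fin l → ℂ)) (γ : Fin l → ℂ) : Fin l → ℂ :=
  w (γ - rho1 l) + rho1 l

/-- `z ∈ ℂ` is lexicographically positive: `Re z > 0`, or `Re z = 0` and `Im z > 0`. -/
def LexPos (z : ℂ) : Prop := 0 < z.re ∨ (z.re = 0 ∧ 0 < z.im)


/-- Auxiliary: the linear map negating the last coordinate. -/
noncomputable def negLast (m : ℕ) : (Fin (m+1) → ℂ) →ₗ[ℂ] (Fin (m+1) → ℂ) where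
  toFun v := fun i => (if i = Fin.last m then (-1 : ℂ) else 1) * v i
  map_add' v w := by funext i; simp [mul_add]
  map_smul' c v := by funext i; simp [Pi.smul_apply, smul_eq_mul]

/-- Let `k₁, …, k_l ∈ ℂ` with `k_l = 0` and `k_i` lexicographically positive
for `i < l`, and set `u = (k₁ + 1/2, …, k_{l-1} + 1/2, 1/2)`. For `γ ∈ {0,1}^l`, the vector
`u - γ` lies in the orbit of `u` under the group of signed permutations if and only if
`γ = 0` or `γ = e_l`.  (Here `l = m + 1 ≥ 1`.) -/
theorem statement10 (m : ℕ) (k : Fin (m + 1) → ℂ)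
    (hlast : k (Fin.last m) = 0)
    (hpos : ∀ i : Fin (m + 1), i ≠ Fin.last m → LexPos (k i))
    (γ : Fin (m + 1) → ℂ) (hγ : γ ∈ Gam (m + 1)) :
    (∃ w : (Fin (m + 1) → ℂ) →ₗ[ℂ] (Fin (m + 1) → ℂ), IsSignedPerm w ∧
        w (fun i => k i + 1/2) = (fun i => k i + 1/2) - γ) ↔
      (γ = 0 ∨ γ = Pi.single (Fin.last m) (1 : ℂ)) := by
  constructor
  · rintro ⟨w, ⟨σ, ε, hε, hw⟩, hwu⟩
    set u : Fin (m+1) → ℂ := fun i => k i + 1/2 with hu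
    -- sum of squares is preserved
    have hsq : ∀ i, (ε i)^2 = 1 := by
      intro i; rcases hε i with h | h <;> simp [h]
    have hsum : ∑ i, (u i - γ i)^2 = ∑ i, (u i)^2 := by
      have h1 : ∀ i, u i - γ i = ε i * u (σ.symm i) := by
        intro i
        have := congrFun hwu i
        rw [hw u i] at this
        simpa using this.symm
      calc ∑ i, (u i - γ i)^2 = ∑ i, (ε i * u (σ.symm i))^2 := by
            exact Finset.sum_congr rfl fun i _ => by rw [h1 i]
        _ = ∑ i, (u (σ.symm i))^2 := by
            refine Finset.sum_congr rfl fun i _ => ?_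
            rw [mul_pow, hsq i, one_mul]
        _ = ∑ i, (u i)^2 := Equiv.sum_comp σ.symm (fun j => (u j)^2)
    have hk2 : ∑ i, 2 * (γ i * k i) = 0 := by
      have ht : ∀ i, 2*(γ i * k i) = (u i)^2 - (u i - γ i)^2 := by
        intro i
        rcases hγ i with h | h <;> simp only [hu, h] <;> ring
      rw [Finset.sum_congr rfl (fun i _ => ht i), Finset.sum_sub_distrib, hsum, sub_self]
    have hk0 : ∑ i, γ i * k i = 0 := by
      rw [← Finset.mul_sum] at hk2
      have : (2:ℂ) ≠ 0 := two_ne_zero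
      exact (mul_eq_zero.mp hk2).resolve_left this
    -- restrict to the support of γ
    set S : Finset (Fin (m+1)) := Finset.univ.filter (fun i => γ i = 1) with hS
    have hkS : ∑ i ∈ S, k i = 0 := by
      rw [← hk0]
      rw [Finset.sum_filter]
      refine (Finset.sum_congr rfl fun i _ => ?_)
      rcases hγ i with h | h <;> simp [h]
    have hreS : ∑ i ∈ S, (k i).re = 0 := by
      have := congrArg Complex.re hkS
      simpa [Complex.re_sum] using this
    have hrenn : ∀ i ∈ S, 0 ≤ (k i).re := by
      intro i _
      by_cases hi : i = Fin.last m
      · simp [hi, hlast]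
      · rcases hpos i hi with h | ⟨h, _⟩ <;> [exact le_of_lt h; exact le_of_eq h.symm]
    have hre0 : ∀ i ∈ S, (k i).re = 0 :=
      (Finset.sum_eq_zero_iff_of_nonneg hrenn).mp hreS
    have himS : ∑ i ∈ S, (k i).im = 0 := by
      have := congrArg Complex.im hkS
      simpa [Complex.im_sum] using this
    -- no i ≠ last is in S
    have hnot : ∀ i ∈ S, i = Fin.last m := by
      by_contra hcon
      push_neg at hcon
      obtain ⟨j, hjS, hjne⟩ := hcon
      have himnn : ∀ i ∈ S, 0 ≤ (k i).im := by
        intro i hi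
        by_cases h : i = Fin.last m
        · simp [h, hlast]
        · rcases hpos i h with hp | ⟨_, hp⟩
          · exact absurd (hre0 i hi) (ne_of_gt hp)
          · exact le_of_lt hp
      have hjpos : 0 < (k j).im := by
        rcases hpos j hjne with hp | ⟨_, hp⟩
        · exact absurd (hre0 j hjS) (ne_of_gt hp)
        · exact hp
      have : 0 < ∑ i ∈ S, (k i).im :=
        Finset.sum_pos' himnn ⟨j, hjS, hjpos⟩
      linarith
    have hγ0 : ∀ i, i ≠ Fin.last m → γ i = 0 := by
      intro i hi
      rcases hγ i with h | h
      · exact h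
      · exact absurd (hnot i (by simp [hS, h])) hi
    rcases hγ (Fin.last m) with h | h
    · left
      funext i
      by_cases hi : i = Fin.last m
      · simp [hi, h]
      · simp [hγ0 i hi]
    · right
      funext i
      by_cases hi : i = Fin.last m
      · simp [hi, h, Pi.single_apply]
      · simp [hγ0 i hi, Pi.single_apply, hi]
  · rintro (rfl | rfl)
    · refine ⟨LinearMap.id, ⟨1, fun _ => 1, fun i => Or.inl rfl, fun v i => by simp; rfl⟩, by simp⟩
    · refine ⟨negLast m, ⟨1, fun i => if i = Fin.last m then (-1:ℂ) else 1,
        fun i => by by_cases h : i = Fin.last m <;> simp [h],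
        fun v i => rfl⟩, ?_⟩
      funext i
      by_cases h : i = Fin.last m
      · simp [negLast, h, hlast, Pi.single_apply]
        norm_num
      · simp [negLast, h, Pi.single_apply]
end

section
/- Let l ≥ 1, let k₁, …, k_l ∈ ℂ with k_l = 0 and each kᵢ (1 ≤ i ≤ l−1) lexicographically positive (Re kᵢ > 0, or Re kᵢ = 0 and Im kᵢ > 0). Set u = (k₁ + 1/2, …, k_{l−1} + 1/2, 1/2) and v = (k₁, …, k_{l−1}, 0) in ℂ^l. Then every signed permutation w of ℂ^l fixing u also fixes v: w(u) = u implies w(v) = v. In other words, Stab_W(u) ⊆ Stab_W(v). -/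
/-- Let `k₁, …, k_l ∈ ℂ` with `k_l = 0` and `k_i` lexicographically positive
for `i < l`, and set `u = (k₁ + 1/2, …, k_{l-1} + 1/2, 1/2)`, `v = (k₁, …, k_{l-1}, 0)`.
Every signed permutation fixing `u` also fixes `v`: `Stab_W(u) ⊆ Stab_W(v)`.
(Here `l = m + 1 ≥ 1`.) -/
theorem statement11 (m : ℕ) (k : Fin (m + 1) → ℂ)
    (hlast : k (Fin.last m) = 0)
    (hpos : ∀ i : Fin (m + 1), i ≠ Fin.last m → LexPos (k i))
    (w : (Fin (m + 1) → ℂ) →ₗ[ℂ] (Fin (m + 1) → ℂ)) (hw : IsSignedPerm w)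
    (hfix : w (fun i => k i + 1/2) = (fun i => k i + 1/2)) :
    w k = k := by
  obtain ⟨σ, ε, hε, hform⟩ := hw
  have hre : ∀ j, 0 ≤ (k j).re := by
    intro j
    by_cases hj : j = Fin.last m
    · rw [hj, hlast]; simp
    · rcases hpos j hj with h | ⟨h, _⟩ <;> linarith
  funext i
  have h := congrFun hfix i
  rw [hform] at h
  rw [hform]
  rcases hε i with he | he
  · rw [he] at h ⊢
    have : k (σ.symm i) = k i := by linear_combination h
    rw [this]; ring
  · exfalso
    rw [he] at h
    have hsum : k (σ.symm i) + k i = -1 := by linear_combination -h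
    have := congrArg Complex.re hsum
    simp [Complex.add_re] at this
    have h1 := hre (σ.symm i)
    have h2 := hre i
    linarith
end

section
/- Let l ≥ 1, let k₁, …, k_l ∈ ℂ with k_l = 0 and each kᵢ (1 ≤ i ≤ l−1) lexicographically positive (Re kᵢ > 0, or Re kᵢ = 0 and Im kᵢ > 0). Set u = (k₁ + 1/2, …, k_{l−1} + 1/2, 1/2) and v = (k₁, …, k_{l−1}, 0) in ℂ^l, and let e_l be the l-th standard basis vector, so u − e_l = (k₁ + 1/2, …, k_{l−1} + 1/2, −1/2). Then every signed permutation w of ℂ^l fixing u − e_l also fixes v: w(u − e_l) = u − e_l implies w(v) = v. In other words, Stab_W(u − e_l) ⊆ Stab_W(v). -/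
/-- Let `k₁, …, k_l ∈ ℂ` with `k_l = 0` and `k_i` lexicographically positive
for `i < l`, and set `u = (k₁ + 1/2, …, k_{l-1} + 1/2, 1/2)`, `v = (k₁, …, k_{l-1}, 0)`, so
that `u - e_l = (k₁ + 1/2, …, k_{l-1} + 1/2, -1/2)`. Every signed permutation fixing `u - e_l`
also fixes `v`: `Stab_W(u - e_l) ⊆ Stab_W(v)`.  (Here `l = m + 1 ≥ 1`.) -/
theorem statement12 (m : ℕ) (k : Fin (m + 1) → ℂ)
    (hlast : k (Fin.last m) = 0)
    (hpos : ∀ i : Fin (m + 1), i ≠ Fin.last m → LexPos (k i))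
    (w : (Fin (m + 1) → ℂ) →ₗ[ℂ] (Fin (m + 1) → ℂ)) (hw : IsSignedPerm w)
    (hfix : w ((fun i => k i + 1/2) - Pi.single (Fin.last m) (1 : ℂ)) =
      (fun i => k i + 1/2) - Pi.single (Fin.last m) (1 : ℂ)) :
    w k = k := by
  obtain ⟨σ, ε, hε, hwdef⟩ := hw
  set u : Fin (m + 1) → ℂ := (fun i => k i + 1/2) - Pi.single (Fin.last m) (1 : ℂ) with hu
  -- coordinates of u
  have hun : ∀ i, i ≠ Fin.last m → u i = k i + 1/2 := by
    intro i hi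
    simp [hu, Pi.single_eq_of_ne hi]
  have hul : u (Fin.last m) = -(1/2) := by
    simp [hu, hlast]
    norm_num
  have hrenn : ∀ i, i ≠ Fin.last m → 0 ≤ (k i).re := by
    intro i hi
    rcases hpos i hi with h | ⟨h, _⟩ <;> linarith
  have hre : ∀ i, i ≠ Fin.last m → 0 < (u i).re := by
    intro i hi
    rw [hun i hi]
    have := hrenn i hi
    simp [Complex.add_re]
    norm_num
    linarith
  -- key equation
  have key : ∀ i, ε i * u (σ.symm i) = u i := by
    intro i
    rw [← hwdef u i, hfix]
  -- for i ≠ last, σ.symm i ≠ last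
  have hns : ∀ i, i ≠ Fin.last m → σ.symm i ≠ Fin.last m := by
    intro i hi hcon
    have hk := key i
    rw [hcon, hul] at hk
    rcases hε i with h1 | h1
    · rw [h1, one_mul] at hk
      have := hre i hi
      rw [← hk] at this
      simp at this
      norm_num at this
    · rw [h1] at hk
      have : u i = 1/2 := by rw [← hk]; ring
      rw [hun i hi] at this
      have hki : k i = 0 := by linear_combination this
      have hlp := hpos i hi
      rw [hki] at hlp
      rcases hlp with h | ⟨_, h⟩ <;> simp at h
  -- hence σ.symm last = last
  have hsl : σ.symm (Fin.last m) = Fin.last m := by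
    by_contra hcon
    have h1 : σ (Fin.last m) ≠ Fin.last m := by
      intro h
      exact hcon (by simpa [h] using Equiv.symm_apply_apply σ (Fin.last m))
    have := hns (σ (Fin.last m)) h1
    rw [Equiv.symm_apply_apply] at this
    exact this rfl
  funext i
  rw [hwdef k i]
  by_cases hi : i = Fin.last m
  · subst hi
    rw [hsl, hlast, mul_zero]
  · have hj : σ.symm i ≠ Fin.last m := hns i hi
    have hk := key i
    rw [hun i hi, hun (σ.symm i) hj] at hk
    rcases hε i with h1 | h1
    · rw [h1, one_mul] at hk ⊢
      linear_combination hk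
    · exfalso
      rw [h1] at hk
      have hre1 := hrenn i hi
      have hre2 := hrenn (σ.symm i) hj
      have := congrArg Complex.re hk
      simp [Complex.add_re] at this
      norm_num at this
      linarith
end

section
/- Let l ≥ 1, let k₁, …, k_l ∈ ℂ with k_l = 0 and each kᵢ (1 ≤ i ≤ l−1) lexicographically positive (Re kᵢ > 0, or Re kᵢ = 0 and Im kᵢ > 0). Set u = (k₁ + 1/2, …, k_{l−1} + 1/2, 1/2) and v = (k₁, …, k_{l−1}, 0) in ℂ^l, and let e_l be the l-th standard basis vector. Then for any signed permutations w, y of ℂ^l and any γ, γ' ∈ {0, e_l}: if w(u − γ) = y(u − γ'), then w(v) = y(v). -/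
private lemma lexpos_re_nonneg' {x : ℂ} (hx : LexPos x) : 0 ≤ x.re := by
  rcases hx with h | ⟨h, _⟩ <;> linarith

private lemma lexpos_ne_neg_one' {x : ℂ} (hx : LexPos x) : x ≠ -1 := by
  intro h
  have : x.re = -1 := by rw [h]; simp
  have := lexpos_re_nonneg' hx
  linarith

private lemma lexpos_ne_zero' {x : ℂ} (hx : LexPos x) : x ≠ 0 := by
  intro h
  subst h
  rcases hx with h' | ⟨h1, h2⟩
  · simp only [Complex.zero_re] at h'; linarith
  · simp only [Complex.zero_im] at h2; linarith

private lemma key' {x z s c d : ℂ} (hs : s = 1 ∨ s = -1)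
    (hx : (LexPos x ∧ c = 0) ∨ (x = 0 ∧ (c = 0 ∨ c = 1)))
    (hz : (LexPos z ∧ d = 0) ∨ (z = 0 ∧ (d = 0 ∨ d = 1)))
    (h : x + 1/2 - c = s * (z + 1/2 - d)) : x = s * z := by
  rcases hs with rfl | rfl
  · rcases hx with ⟨hx, rfl⟩ | ⟨rfl, hc⟩ <;> rcases hz with ⟨hz, rfl⟩ | ⟨rfl, hd⟩
    · linear_combination h
    · rcases hd with rfl | rfl
      · linear_combination h
      · exact absurd (by linear_combination h) (lexpos_ne_neg_one' hx)
    · rcases hc with rfl | rfl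
      · linear_combination h
      · exact absurd (by linear_combination -h) (lexpos_ne_neg_one' hz)
    · simp
  · rcases hx with ⟨hx, rfl⟩ | ⟨rfl, hc⟩ <;> rcases hz with ⟨hz, rfl⟩ | ⟨rfl, hd⟩
    · exfalso
      have hsum : x.re + z.re = -1 := by
        have : x + z = -1 := by linear_combination h
        have := congrArg Complex.re this
        simpa using this
      have := lexpos_re_nonneg' hx
      have := lexpos_re_nonneg' hz
      linarith
    · rcases hd with rfl | rfl
      · exact absurd (by linear_combination h) (lexpos_ne_neg_one' hx)
      · exact absurd (by linear_combination h) (lexpos_ne_zero' hx)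
    · rcases hc with rfl | rfl
      · exact absurd (by linear_combination h) (lexpos_ne_neg_one' hz)
      · exact absurd (by linear_combination h) (lexpos_ne_zero' hz)
    · simp

private lemma coord_cases' (m : ℕ) (k : Fin (m + 1) → ℂ)
    (hlast : k (Fin.last m) = 0)
    (hpos : ∀ i : Fin (m + 1), i ≠ Fin.last m → LexPos (k i))
    (γ : Fin (m + 1) → ℂ)
    (hγ : γ ∈ ({0, Pi.single (Fin.last m) (1 : ℂ)} : Set (Fin (m + 1) → ℂ)))
    (a : Fin (m + 1)) :
    (LexPos (k a) ∧ γ a = 0) ∨ (k a = 0 ∧ (γ a = 0 ∨ γ a = 1)) := by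
  by_cases ha : a = Fin.last m
  · subst ha
    refine Or.inr ⟨hlast, ?_⟩
    rcases hγ with rfl | rfl
    · exact Or.inl rfl
    · exact Or.inr (Pi.single_eq_same _ _)
  · refine Or.inl ⟨hpos a ha, ?_⟩
    rcases hγ with rfl | rfl
    · rfl
    · exact Pi.single_eq_of_ne ha _

/-- Let `k₁, …, k_l ∈ ℂ` with `k_l = 0` and `k_i` lexicographically positive
for `i < l`, and set `u = (k₁ + 1/2, …, k_{l-1} + 1/2, 1/2)`, `v = (k₁, …, k_{l-1}, 0)`.
For signed permutations `w, y` and `γ, γ' ∈ {0, e_l}`: if `w(u - γ) = y(u - γ')` then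
`w(v) = y(v)`.  (Here `l = m + 1 ≥ 1`.) -/
theorem statement13 (m : ℕ) (k : Fin (m + 1) → ℂ)
    (hlast : k (Fin.last m) = 0)
    (hpos : ∀ i : Fin (m + 1), i ≠ Fin.last m → LexPos (k i))
    (w y : (Fin (m + 1) → ℂ) →ₗ[ℂ] (Fin (m + 1) → ℂ))
    (hw : IsSignedPerm w) (hy : IsSignedPerm y)
    (γ γ' : Fin (m + 1) → ℂ)
    (hγ : γ ∈ ({0, Pi.single (Fin.last m) (1 : ℂ)} : Set (Fin (m + 1) → ℂ)))
    (hγ' : γ' ∈ ({0, Pi.single (Fin.last m) (1 : ℂ)} : Set (Fin (m + 1) → ℂ)))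
    (heq : w ((fun i => k i + 1/2) - γ) = y ((fun i => k i + 1/2) - γ')) :
    w k = y k := by
  obtain ⟨σ, ε, hε, hwv⟩ := hw
  obtain ⟨τ, η, hη, hyv⟩ := hy
  funext i
  have h := congrFun heq i
  rw [hwv, hyv] at h
  rw [hwv, hyv]
  set a := σ.symm i with ha
  set b := τ.symm i with hb
  simp only [Pi.sub_apply] at h
  have hxa := coord_cases' m k hlast hpos γ hγ a
  have hxb := coord_cases' m k hlast hpos γ' hγ' b
  rcases hε i with he | he <;> rcases hη i with hn | hn <;> rw [he, hn] at h ⊢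
  · have := key' (Or.inl rfl) hxa hxb (by linear_combination h)
    linear_combination this
  · have := key' (Or.inr rfl) hxa hxb (by linear_combination h)
    linear_combination this
  · have := key' (Or.inr rfl) hxa hxb (by linear_combination -h)
    linear_combination -this
  · have := key' (Or.inl rfl) hxa hxb (by linear_combination -h)
    linear_combination -this
end
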